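/- Let p be a prime, let n be a non-negative integer, and let K' be a subgroup of ℤ_p^n of order p^{d'} with d' ≤ n. Then for every integer d with 0 ≤ d ≤ n, the fraction of subgroups of ℤ_p^n of order p^d that contain K' (i.e., the number of subgroups K of order p^d with K' ⊆ K divided by β_p(n,d)) equals ∏_{0 ≤ i < d'} (p^{d−i} − 1)/(p^{n−i} − 1). In particular, writing D = p^d, this fraction equals Q(D) for the real polynomial Q(D) = ∏_{0 ≤ i < d'} (D/p^i − 1)/(p^{n−i} − 1) of degree exactly d' in D. -/

import Mathlib

open Polynomial

/-- The polynomial `Q(D) = ∏_{0 ≤ i < d'} (D/p^i − 1)/(p^{n−i} − 1)` in the variable `D`. -/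
noncomputable def fractionPoly (p n d' : ℕ) : Polynomial ℝ :=
  ∏ i ∈ Finset.range d',
    Polynomial.C (((p : ℝ) ^ (n - i) - 1)⁻¹) *
      (Polynomial.C (((p : ℝ) ^ i)⁻¹) * Polynomial.X - 1)

section Aux


open Module Submodule

variable {F V : Type*} [Field F] [Fintype F] [AddCommGroup V] [Module F V] [Finite V]

lemma card_li (k : ℕ) :
    Nat.card {f : Fin k → V // LinearIndependent F f} =
      ∏ i ∈ Finset.range k, (Nat.card V - Fintype.card F ^ i) := by
  classical
  cases nonempty_fintype V
  induction k with
  | zero =>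
      rw [Finset.prod_range_zero, Nat.card_eq_one_iff_unique]
      constructor
      · exact ⟨fun a b => Subtype.ext (funext fun i => i.elim0)⟩
      · exact ⟨⟨fun i => i.elim0, linearIndependent_empty_type⟩⟩
  | succ k ih =>
      have e := Nat.card_congr (equiv_linearIndependent (K := F) (V := V) k)
      rw [e]
      simp only [Nat.card_eq_fintype_card] at *
      rw [Fintype.card_sigma]
      have hfib : ∀ s : {s : Fin k → V // LinearIndependent F s},
          Fintype.card ((span F (Set.range (s : Fin k → V)))ᶜ : Set V) =
            Fintype.card V - Fintype.card F ^ k := by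
        intro s
        have hspan : Fintype.card (span F (Set.range (s : Fin k → V))) = Fintype.card F ^ k := by
          rw [card_eq_pow_finrank (K := F), finrank_span_eq_card s.2, Fintype.card_fin]
        rw [← hspan]
        exact Fintype.card_compl_set _
      simp only [hfib, Finset.sum_const, smul_eq_mul, Finset.prod_range_succ, Finset.card_univ, ih]

/-- Fiber of the span map over a `k`-dimensional subspace `W` is equivalent to
linearly independent `k`-tuples in `W`. -/
lemma card_submodule_mul (k : ℕ) :
    Nat.card {W : Submodule F V // finrank F W = k} *
        ∏ i ∈ Finset.range k, (Fintype.card F ^ k - Fintype.card F ^ i) =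
      ∏ i ∈ Finset.range k, (Nat.card V - Fintype.card F ^ i) := by
  classical
  cases nonempty_fintype V
  rw [← card_li (F := F) (V := V) k]
  set g : {f : Fin k → V // LinearIndependent F f} → {W : Submodule F V // finrank F W = k} :=
    fun f => ⟨span F (Set.range f.1), by
      rw [finrank_span_eq_card f.2, Fintype.card_fin]⟩ with hg
  rw [Nat.card_congr (Equiv.sigmaFiberEquiv g).symm]
  simp only [Nat.card_eq_fintype_card]
  rw [Fintype.card_sigma]
  have hfib : ∀ W : {W : Submodule F V // finrank F W = k},
      Nat.card {f : {f : Fin k → V // LinearIndependent F f} // g f = W} =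
        ∏ i ∈ Finset.range k, (Fintype.card F ^ k - Fintype.card F ^ i) := by
    intro W
    have e : {f : {f : Fin k → V // LinearIndependent F f} // g f = W} ≃
        {h : Fin k → W.1 // LinearIndependent F h} := by
      refine ⟨fun f => ⟨fun i => ⟨f.1.1 i, ?_⟩, ?_⟩, fun h => ⟨⟨W.1.subtype ∘ h.1,
        h.2.map' W.1.subtype W.1.ker_subtype⟩, ?_⟩, fun f => ?_, fun h => ?_⟩
      · have : span F (Set.range f.1.1) = W.1 := congrArg Subtype.val f.2
        exact this ▸ subset_span (Set.mem_range_self i)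
      · apply LinearIndependent.of_comp W.1.subtype
        convert f.1.2 using 1
        rfl
      · apply Subtype.ext
        show span F (Set.range (W.1.subtype ∘ h.1)) = W.1
        rw [Set.range_comp, Submodule.span_image]
        have : span F (Set.range h.1) = ⊤ := by
          have : Module.Finite F W.1 := Module.Finite.of_finite
          apply h.2.span_eq_top_of_card_eq_finrank'
          rw [Fintype.card_fin, W.2]
        rw [this, Submodule.map_top, Submodule.range_subtype]
      · apply Subtype.ext; apply Subtype.ext; rfl
      · apply Subtype.ext; funext i; apply Subtype.ext; rfl
    rw [Nat.card_congr e, card_li (F := F) (V := W.1) k]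
    have hW : Nat.card W.1 = Fintype.card F ^ k := by
      rw [Nat.card_eq_fintype_card, card_eq_pow_finrank (K := F), W.2]
    rw [hW]
  have hfib' : ∀ W : {W : Submodule F V // finrank F W = k},
      Fintype.card {f : {f : Fin k → V // LinearIndependent F f} // g f = W} =
        ∏ i ∈ Finset.range k, (Fintype.card F ^ k - Fintype.card F ^ i) := fun W => by
    rw [← Nat.card_eq_fintype_card]; exact hfib W
  simp only [hfib', Finset.sum_const, smul_eq_mul, Finset.card_univ,
    Nat.card_eq_fintype_card]

lemma finrank_comap_mkQ [FiniteDimensional F V] (K'' : Submodule F V)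
    (W : Submodule F (V ⧸ K'')) :
    finrank F (W.comap K''.mkQ) = finrank F W + finrank F K'' := by
  have hle : K'' ≤ W.comap K''.mkQ := fun x hx => by
    show K''.mkQ x ∈ W
    have : K''.mkQ x = 0 := by
      rw [Submodule.mkQ_apply, Submodule.Quotient.mk_eq_zero]; exact hx
    rw [this]; exact W.zero_mem
  have h := LinearMap.finrank_range_add_finrank_ker
    (K''.mkQ.comp (W.comap K''.mkQ).subtype)
  rw [LinearMap.range_comp, Submodule.range_subtype, Submodule.map_comap_eq,
    Submodule.range_mkQ, top_inf_eq] at h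
  rw [LinearMap.ker_comp, Submodule.ker_mkQ] at h
  rw [← h, (Submodule.comapSubtypeEquivOfLe hle).finrank_eq]

lemma card_submodule_ge [FiniteDimensional F V] (K'' : Submodule F V) (m : ℕ) :
    Nat.card {K : Submodule F V // finrank F K = m ∧ K'' ≤ K} =
      Nat.card {W : Submodule F (V ⧸ K'') // finrank F W + finrank F K'' = m} := by
  apply Nat.card_congr
  refine Equiv.trans ?_ (Equiv.subtypeEquiv (q := fun x => finrank F x.1 = m) (Submodule.comapMkQRelIso K'').toEquiv ?_).symm
  · exact ((Equiv.subtypeSubtypeEquivSubtypeInter _ _).trans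
      (Equiv.subtypeEquivRight (fun K => and_comm))).symm
  · intro W
    show finrank F W + finrank F K'' = m ↔ finrank F (((Submodule.comapMkQRelIso K'').toEquiv W : {p' // K'' ≤ p'}) : Submodule F V) = m
    have h2 : (((Submodule.comapMkQRelIso K'').toEquiv W : {p' // K'' ≤ p'}) : Submodule F V) = W.comap K''.mkQ := rfl
    rw [h2, finrank_comap_mkQ]

section ZModCount

variable (p n : ℕ) [Fact p.Prime]

lemma card_npow : Nat.card (Fin n → ZMod p) = p ^ n := by
  simp [Nat.card_eq_fintype_card, ZMod.card]

lemma finrank_npow : finrank (ZMod p) (Fin n → ZMod p) = n := by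
  simp

lemma card_submod_iff (W : Submodule (ZMod p) (Fin n → ZMod p)) (d : ℕ) :
    Nat.card W = p ^ d ↔ finrank (ZMod p) W = d := by
  classical
  cases nonempty_fintype W
  have h : Nat.card W = p ^ finrank (ZMod p) W := by
    rw [Nat.card_eq_fintype_card, card_eq_pow_finrank (K := ZMod p), ZMod.card]
  rw [h]
  exact ⟨fun h' => Nat.pow_right_injective (Fact.out : p.Prime).two_le h', fun h' => by rw [h']⟩

lemma count_subgroups (d : ℕ) :
    Nat.card {K : AddSubgroup (Fin n → ZMod p) // Nat.card K = p ^ d} *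
        ∏ i ∈ Finset.range d, (p ^ d - p ^ i) =
      ∏ i ∈ Finset.range d, (p ^ n - p ^ i) := by
  have e : {K : AddSubgroup (Fin n → ZMod p) // Nat.card K = p ^ d} ≃
      {W : Submodule (ZMod p) (Fin n → ZMod p) // finrank (ZMod p) W = d} := by
    refine Equiv.subtypeEquiv (AddSubgroup.toZModSubmodule p).toEquiv (fun K => ?_)
    rw [← card_submod_iff]
    exact Iff.of_eq (congrArg (· = p ^ d)
      (Nat.card_congr (Equiv.setCongr (AddSubgroup.coe_toZModSubmodule p K))).symm)
  rw [Nat.card_congr e]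
  have := card_submodule_mul (F := ZMod p) (V := Fin n → ZMod p) d
  rwa [ZMod.card, card_npow] at this

lemma count_subgroups_ge (d' d : ℕ) (hdd : d' ≤ d) (hd : d ≤ n)
    (K' : AddSubgroup (Fin n → ZMod p)) (hK' : Nat.card K' = p ^ d') :
    Nat.card {K : AddSubgroup (Fin n → ZMod p) // Nat.card K = p ^ d ∧ K' ≤ K} *
        ∏ i ∈ Finset.range (d - d'), (p ^ (d - d') - p ^ i) =
      ∏ i ∈ Finset.range (d - d'), (p ^ (n - d') - p ^ i) := by
  set K'' : Submodule (ZMod p) (Fin n → ZMod p) := AddSubgroup.toZModSubmodule p K' with hK''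
  have hcard : Nat.card K'' = p ^ d' := by
    rw [← hK']
    exact Nat.card_congr (Equiv.setCongr (AddSubgroup.coe_toZModSubmodule p K'))
  have hrank : finrank (ZMod p) K'' = d' := (card_submod_iff p n K'' d').mp hcard
  have e : {K : AddSubgroup (Fin n → ZMod p) // Nat.card K = p ^ d ∧ K' ≤ K} ≃
      {K : Submodule (ZMod p) (Fin n → ZMod p) // finrank (ZMod p) K = d ∧ K'' ≤ K} := by
    refine Equiv.subtypeEquiv (AddSubgroup.toZModSubmodule p).toEquiv (fun K => ?_)
    constructor
    · rintro ⟨h1, h2⟩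
      refine ⟨?_, (AddSubgroup.toZModSubmodule p).le_iff_le.mpr h2⟩
      rw [← card_submod_iff]
      rw [← h1]
      exact Nat.card_congr (Equiv.setCongr (AddSubgroup.coe_toZModSubmodule p K))
    · rintro ⟨h1, h2⟩
      refine ⟨?_, (AddSubgroup.toZModSubmodule p).le_iff_le.mp h2⟩
      rw [← (card_submod_iff p n _ d).mpr h1]
      exact (Nat.card_congr (Equiv.setCongr (AddSubgroup.coe_toZModSubmodule p K))).symm
  rw [Nat.card_congr e, card_submodule_ge K'' d]
  have e2 : {W : Submodule (ZMod p) ((Fin n → ZMod p) ⧸ K'') //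
      finrank (ZMod p) W + finrank (ZMod p) K'' = d} ≃
      {W : Submodule (ZMod p) ((Fin n → ZMod p) ⧸ K'') // finrank (ZMod p) W = d - d'} := by
    refine Equiv.subtypeEquivRight (fun W => ?_)
    rw [hrank]
    omega
  rw [Nat.card_congr e2]
  have hq : Nat.card ((Fin n → ZMod p) ⧸ K'') = p ^ (n - d') := by
    cases nonempty_fintype ((Fin n → ZMod p) ⧸ K'')
    rw [Nat.card_eq_fintype_card, card_eq_pow_finrank (K := ZMod p), ZMod.card]
    congr 1
    have := Submodule.finrank_quotient_add_finrank K''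
    rw [hrank, finrank_npow] at this
    omega
  have := card_submodule_mul (F := ZMod p) (V := (Fin n → ZMod p) ⧸ K'') (d - d')
  rwa [ZMod.card, hq] at this

lemma count_subgroups_ge_zero (d' d : ℕ) (hdd : d < d')
    (K' : AddSubgroup (Fin n → ZMod p)) (hK' : Nat.card K' = p ^ d') :
    Nat.card {K : AddSubgroup (Fin n → ZMod p) // Nat.card K = p ^ d ∧ K' ≤ K} = 0 := by
  rw [Nat.card_eq_zero]
  left
  rw [isEmpty_subtype]
  rintro K ⟨h1, h2⟩
  have := AddSubgroup.card_dvd_of_le h2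
  rw [hK', h1] at this
  have := (Nat.pow_dvd_pow_iff_le_right (Fact.out : p.Prime).one_lt).mp this
  omega

end ZModCount

lemma cast_prod_sub (p a b : ℕ) (hp : 1 ≤ p) (hba : b ≤ a) :
    ((∏ i ∈ Finset.range b, (p ^ a - p ^ i) : ℕ) : ℝ) =
      ∏ i ∈ Finset.range b, ((p : ℝ) ^ a - (p : ℝ) ^ i) := by
  rw [Nat.cast_prod]
  refine Finset.prod_congr rfl (fun i hi => ?_)
  have : p ^ i ≤ p ^ a := Nat.pow_le_pow_right hp (le_trans (Finset.mem_range.mp hi).le hba)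
  rw [Nat.cast_sub this]
  push_cast
  ring

lemma prod_sub_pos (p a b : ℕ) (hp : 2 ≤ p) (hba : b ≤ a) :
    0 < ∏ i ∈ Finset.range b, ((p : ℝ) ^ a - (p : ℝ) ^ i) := by
  refine Finset.prod_pos (fun i hi => ?_)
  have h1 : (1 : ℝ) < (p : ℝ) := by exact_mod_cast hp
  have : (p : ℝ) ^ i < (p : ℝ) ^ a :=
    pow_lt_pow_right₀ h1 (lt_of_lt_of_le (Finset.mem_range.mp hi) hba)
  linarith

set_option maxHeartbeats 1000000 in
theorem fraction_subgroups_containing' (p n d' : ℕ) (hp : p.Prime)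
    (K' : AddSubgroup (Fin n → ZMod p)) (hK' : Nat.card K' = p ^ d') (hd' : d' ≤ n) :
    ∀ d : ℕ, d ≤ n →
      (Nat.card {K : AddSubgroup (Fin n → ZMod p) // Nat.card K = p ^ d ∧ K' ≤ K} : ℝ) /
          (Nat.card {K : AddSubgroup (Fin n → ZMod p) // Nat.card K = p ^ d} : ℝ) =
        ∏ i ∈ Finset.range d',
          (((p : ℝ) ^ d / (p : ℝ) ^ i - 1) / ((p : ℝ) ^ (n - i) - 1)) := by
  haveI : Fact p.Prime := ⟨hp⟩
  intro d hd
  have h1 : (1 : ℝ) < (p : ℝ) := by exact_mod_cast hp.two_le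
  have hp0 : (p : ℝ) ≠ 0 := by positivity
  -- denominator
  set c : ℝ := (Nat.card {K : AddSubgroup (Fin n → ZMod p) // Nat.card K = p ^ d} : ℝ)
  set m : ℝ := (Nat.card {K : AddSubgroup (Fin n → ZMod p) //
    Nat.card K = p ^ d ∧ K' ≤ K} : ℝ)
  set A : ℝ := ∏ i ∈ Finset.range d, ((p : ℝ) ^ n - (p : ℝ) ^ i)
  set B : ℝ := ∏ i ∈ Finset.range d, ((p : ℝ) ^ d - (p : ℝ) ^ i)
  have hA : 0 < A := prod_sub_pos p n d hp.two_le hd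
  have hB : 0 < B := prod_sub_pos p d d hp.two_le le_rfl
  have hc : c * B = A := by
    have := congrArg (fun x : ℕ => (x : ℝ)) (count_subgroups p n d)
    simpa [c, A, B, Nat.cast_mul, cast_prod_sub p d d hp.one_le le_rfl,
      cast_prod_sub p n d hp.one_le hd] using this
  have hc0 : c ≠ 0 := by
    intro h
    rw [h, zero_mul] at hc
    exact absurd hc.symm (ne_of_gt hA)
  clear_value c
  by_cases hdd : d' ≤ d
  · -- main case
    set A' : ℝ := ∏ i ∈ Finset.range (d - d'), ((p : ℝ) ^ (n - d') - (p : ℝ) ^ i)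
    set B' : ℝ := ∏ i ∈ Finset.range (d - d'), ((p : ℝ) ^ (d - d') - (p : ℝ) ^ i)
    have hA' : 0 < A' := prod_sub_pos p (n - d') (d - d') hp.two_le (by omega)
    have hB' : 0 < B' := prod_sub_pos p (d - d') (d - d') hp.two_le le_rfl
    have hm : m * B' = A' := by
      have h := congrArg (fun x : ℕ => (x : ℝ))
        (count_subgroups_ge p n d' d hdd hd K' hK')
      simp only [Nat.cast_mul] at h
      rw [cast_prod_sub p (d - d') (d - d') hp.one_le le_rfl,
        cast_prod_sub p (n - d') (d - d') hp.one_le (by omega : d - d' ≤ n - d')] at h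
      exact h
    clear_value m
    set PA : ℝ := ∏ i ∈ Finset.range d', ((p : ℝ) ^ n - (p : ℝ) ^ i) with hPAdef
    set PB : ℝ := ∏ i ∈ Finset.range d', ((p : ℝ) ^ d - (p : ℝ) ^ i) with hPBdef
    have hPA : 0 < PA := prod_sub_pos p n d' hp.two_le hd'
    have hPB : 0 < PB := prod_sub_pos p d d' hp.two_le hdd
    have hsplit : ∀ a : ℕ, d' ≤ a →
        (∏ i ∈ Finset.range d, ((p : ℝ) ^ a - (p : ℝ) ^ i)) =
          (∏ i ∈ Finset.range d', ((p : ℝ) ^ a - (p : ℝ) ^ i)) *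
            (((p : ℝ) ^ d') ^ (d - d') *
              ∏ i ∈ Finset.range (d - d'), ((p : ℝ) ^ (a - d') - (p : ℝ) ^ i)) := by
      intro a ha
      have hd2 : d = d' + (d - d') := by omega
      conv_lhs => rw [hd2]
      rw [Finset.prod_range_add]
      congr 1
      have hfac : ∀ i ∈ Finset.range (d - d'),
          ((p : ℝ) ^ a - (p : ℝ) ^ (d' + i)) =
            (p : ℝ) ^ d' * ((p : ℝ) ^ (a - d') - (p : ℝ) ^ i) := by
        intro i _
        have h3 : (p : ℝ) ^ (a - d') * (p : ℝ) ^ d' = (p : ℝ) ^ a := by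
          rw [← pow_add]; congr 1; omega
        have h2 : (p : ℝ) ^ (d' + i) = (p : ℝ) ^ d' * (p : ℝ) ^ i := pow_add _ _ _
        rw [h2]
        nlinarith [h3]
      rw [Finset.prod_congr rfl hfac, Finset.prod_mul_distrib, Finset.prod_const,
        Finset.card_range]
    have hAsplit : A = PA * (((p : ℝ) ^ d') ^ (d - d') * A') := hsplit n hd'
    have hBsplit : B = PB * (((p : ℝ) ^ d') ^ (d - d') * B') := hsplit d hdd
    clear_value A B A' B' PA PB
    have key : m / c = PB / PA := by
      have hcA : c = A / B := by field_simp; linarith [hc]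
      have hmA : m = A' / B' := by field_simp; linarith [hm]
      rw [hcA, hmA, hAsplit, hBsplit]
      have hpw : (0:ℝ) < ((p : ℝ) ^ d') ^ (d - d') := by positivity
      field_simp
    rw [key, hPAdef, hPBdef, ← Finset.prod_div_distrib]
    refine Finset.prod_congr rfl (fun i hi => ?_)
    have hin : i < d' := Finset.mem_range.mp hi
    have hqn : (p : ℝ) ^ (n - i) = (p : ℝ) ^ n / (p : ℝ) ^ i := by
      rw [eq_div_iff (by positivity), ← pow_add]; congr 1; omega
    rw [hqn]
    have hpi : (0:ℝ) < (p : ℝ) ^ i := by positivity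
    have hne : (p : ℝ) ^ n - (p : ℝ) ^ i ≠ 0 := by
      have : (p : ℝ) ^ i < (p : ℝ) ^ n := pow_lt_pow_right₀ h1 (by omega)
      linarith
    have hne2 : (p : ℝ) ^ n / (p : ℝ) ^ i - 1 ≠ 0 := by
      rw [div_sub_one (ne_of_gt hpi)]
      exact div_ne_zero hne (ne_of_gt hpi)
    field_simp
  · -- d < d' : numerator is zero, and the product has a zero factor
    push_neg at hdd
    have hm0 : m = 0 := by
      show ((Nat.card _ : ℕ) : ℝ) = 0
      rw [count_subgroups_ge_zero p n d' d hdd K' hK']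
      exact Nat.cast_zero
    clear_value m
    rw [hm0, zero_div]
    symm
    apply Finset.prod_eq_zero (Finset.mem_range.mpr hdd)
    rw [div_self (by positivity : (p:ℝ)^d ≠ 0)]
    simp


end Aux

/-- For a prime `p` and a subgroup `K'` of `ℤ_p^n = (ZMod p)^n` of order `p^{d'}` with
`d' ≤ n`: for every `0 ≤ d ≤ n`, the fraction of subgroups of `ℤ_p^n` of order `p^d`
that contain `K'` equals `∏_{0 ≤ i < d'} (p^{d−i} − 1)/(p^{n−i} − 1)`; in particular,
writing `D = p^d`, this fraction equals `Q(D)` for the real polynomial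
`Q(D) = ∏_{0 ≤ i < d'} (D/p^i − 1)/(p^{n−i} − 1)`, which has degree exactly `d'` in `D`. -/
theorem fraction_subgroups_containing (p n d' : ℕ) (hp : p.Prime)
    (K' : AddSubgroup (Fin n → ZMod p)) (hK' : Nat.card K' = p ^ d') (hd' : d' ≤ n) :
    (∀ d : ℕ, d ≤ n →
      (Nat.card {K : AddSubgroup (Fin n → ZMod p) // Nat.card K = p ^ d ∧ K' ≤ K} : ℝ) /
          (Nat.card {K : AddSubgroup (Fin n → ZMod p) // Nat.card K = p ^ d} : ℝ) =
        ∏ i ∈ Finset.range d',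
          (((p : ℝ) ^ d / (p : ℝ) ^ i - 1) / ((p : ℝ) ^ (n - i) - 1))) ∧
    (fractionPoly p n d').natDegree = d' ∧
    (∀ d : ℕ, d ≤ n →
      (Nat.card {K : AddSubgroup (Fin n → ZMod p) // Nat.card K = p ^ d ∧ K' ≤ K} : ℝ) /
          (Nat.card {K : AddSubgroup (Fin n → ZMod p) // Nat.card K = p ^ d} : ℝ) =
        (fractionPoly p n d').eval ((p : ℝ) ^ d)) := by
  have h1 : (1 : ℝ) < (p : ℝ) := by exact_mod_cast hp.two_le
  have hmain := fraction_subgroups_containing' p n d' hp K' hK' hd'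
  have heval : ∀ d : ℕ,
      (fractionPoly p n d').eval ((p : ℝ) ^ d) =
        ∏ i ∈ Finset.range d',
          (((p : ℝ) ^ d / (p : ℝ) ^ i - 1) / ((p : ℝ) ^ (n - i) - 1)) := by
    intro d
    rw [fractionPoly, Polynomial.eval_prod]
    refine Finset.prod_congr rfl (fun i _ => ?_)
    simp only [eval_mul, eval_sub, eval_C, eval_X, eval_one]
    rw [div_eq_mul_inv ((p:ℝ)^d) ((p:ℝ)^i), div_eq_mul_inv]
    ring
  refine ⟨hmain, ?_, fun d hd => by rw [hmain d hd, heval d]⟩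
  rw [fractionPoly, Polynomial.natDegree_prod]
  · rw [Finset.sum_congr rfl (fun i hi => ?_), Finset.sum_const, smul_eq_mul,
      Finset.card_range, mul_one]
    have hin : i < d' := Finset.mem_range.mp hi
    have hb : ((p : ℝ) ^ i)⁻¹ ≠ 0 := by positivity
    have ha : (((p : ℝ) ^ (n - i) - 1)⁻¹) ≠ 0 := by
      have : (1:ℝ) < (p:ℝ) ^ (n - i) := one_lt_pow₀ h1 (by omega)
      have : (p:ℝ) ^ (n - i) - 1 ≠ 0 := by linarith
      exact inv_ne_zero this
    rw [show (Polynomial.C (((p : ℝ) ^ i)⁻¹) * Polynomial.X - 1 : Polynomial ℝ) =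
      Polynomial.C (((p : ℝ) ^ i)⁻¹) * Polynomial.X + Polynomial.C (-1) by
        rw [Polynomial.C_neg, Polynomial.C_1]; ring]
    rw [Polynomial.natDegree_C_mul ha, Polynomial.natDegree_linear hb]
  · intro i hi
    have hin : i < d' := Finset.mem_range.mp hi
    have hb : ((p : ℝ) ^ i)⁻¹ ≠ 0 := by positivity
    have ha : (((p : ℝ) ^ (n - i) - 1)⁻¹) ≠ 0 := by
      have : (1:ℝ) < (p:ℝ) ^ (n - i) := one_lt_pow₀ h1 (by omega)
      have : (p:ℝ) ^ (n - i) - 1 ≠ 0 := by linarith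
      exact inv_ne_zero this
    apply mul_ne_zero (fun h => ha (by simpa using congrArg (fun q => Polynomial.coeff q 0) h))
    intro h
    have := congrArg (fun q => Polynomial.coeff q 1) h
    simp [Polynomial.coeff_sub, Polynomial.coeff_one] at this
    exact hp.ne_zero (by exact_mod_cast this.1)
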